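/- arXiv:1505.05627 — 4 statements merged into one kernel-verified Lean document; each statement's English description precedes it below -/
import Mathlib

section
/- Define f(t) = (1/2)·log(1 - t + t²) + t/2 - t²/4 for real t. Then for all t with 0 ≤ t ≤ 2, f(t) ≥ t³/36. -/
lemma q_pos' (t : ℝ) : 0 < 1 - t + t ^ 2 := by nlinarith [sq_nonneg (t - 1/2)]

noncomputable def gAux (t : ℝ) : ℝ := Real.log (1 - t + t ^ 2) - t ^ 3 / 18 + t - t ^ 2 / 2

lemma gAux_deriv (t : ℝ) :
    HasDerivAt gAux ((2 * t - 1) / (1 - t + t ^ 2) - t ^ 2 / 6 + 1 - t) t := by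
  have h1 : HasDerivAt (fun s : ℝ => 1 - s + s ^ 2) (2 * t - 1) t := by
    have := ((hasDerivAt_id t).const_sub 1).add (hasDerivAt_pow 2 t)
    refine this.congr_deriv ?_
    ring
  have h2 : HasDerivAt (fun s : ℝ => Real.log (1 - s + s ^ 2))
      ((2 * t - 1) / (1 - t + t ^ 2)) t := by
    have := (Real.hasDerivAt_log (q_pos' t).ne').comp t h1
    refine this.congr_deriv ?_
    field_simp
  have h3 : HasDerivAt (fun s : ℝ => s ^ 3 / 18) (t ^ 2 / 6) t := by
    have := (hasDerivAt_pow 3 t).div_const 18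
    refine this.congr_deriv ?_
    ring
  have h4 : HasDerivAt (fun s : ℝ => s ^ 2 / 2) t t := by
    have := (hasDerivAt_pow 2 t).div_const 2
    refine this.congr_deriv ?_
    ring
  have := ((h2.sub h3).add (hasDerivAt_id t)).sub h4
  exact this

lemma gAux_nonneg_small (t : ℝ) (ht0 : 0 ≤ t) (ht : t ≤ 8/5) : 0 ≤ gAux t := by
  have mono : MonotoneOn gAux (Set.Icc 0 (8/5)) := by
    apply monotoneOn_of_deriv_nonneg (convex_Icc _ _)
    · exact fun x _ => (gAux_deriv x).differentiableAt.continuousAt.continuousWithinAt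
    · exact fun x _ => (gAux_deriv x).differentiableAt.differentiableWithinAt
    · intro x hx
      rw [interior_Icc] at hx
      obtain ⟨hx0, hx1⟩ := hx
      rw [(gAux_deriv x).deriv]
      have hq := q_pos' x
      have key : (x ^ 2 * (11 - 5 * x - x ^ 2) / 6) / (1 - x + x ^ 2)
          = (2 * x - 1) / (1 - x + x ^ 2) - x ^ 2 / 6 + 1 - x := by
        field_simp
        ring
      rw [← key]
      apply div_nonneg _ hq.le
      have h11 : 0 ≤ 11 - 5 * x - x ^ 2 := by nlinarith
      positivity
  have h0 : gAux 0 = 0 := by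
    simp [gAux]
  have := mono (Set.mem_Icc.2 ⟨le_refl 0, by norm_num⟩) (Set.mem_Icc.2 ⟨ht0, ht⟩) ht0
  rw [h0] at this
  exact this

/-- f(t) = (1/2)·log(1 - t + t²) + t/2 - t²/4 satisfies f(t) ≥ t³/36 on [0,2]. -/
theorem stmt_1 (t : ℝ) (ht0 : 0 ≤ t) (ht2 : t ≤ 2) :
    (1 / 2) * Real.log (1 - t + t ^ 2) + t / 2 - t ^ 2 / 4 ≥ t ^ 3 / 36 := by
  rcases le_or_gt t (8/5) with h | h
  · have := gAux_nonneg_small t ht0 h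
    unfold gAux at this
    linarith
  · -- t ∈ (8/5, 2]: log(1-t+t²) ≥ 4/9 suffices
    have hq49 : (49:ℝ)/25 ≤ 1 - t + t ^ 2 := by nlinarith
    have hexp : Real.exp (4/9) ≤ 49/25 := by
      have h1 := Real.add_one_le_exp (-(4/9 : ℝ))
      have h2 := Real.exp_pos (-(4/9 : ℝ))
      have h3 : Real.exp (4/9 : ℝ) * Real.exp (-(4/9 : ℝ)) = 1 := by
        rw [← Real.exp_add]; norm_num
      nlinarith
    have hlog : (4:ℝ)/9 ≤ Real.log (1 - t + t ^ 2) := by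
      calc (4:ℝ)/9 ≤ Real.log (49/25) := (Real.le_log_iff_exp_le (by norm_num)).2 hexp
        _ ≤ Real.log (1 - t + t ^ 2) := Real.log_le_log (by norm_num) hq49
    nlinarith [mul_nonneg (sub_nonneg.2 ht2) (by nlinarith : (0:ℝ) ≤ t ^ 2 + 11 * t + 4)]
end

section
/- Define N(t) = 1 - t/(1+t)² and H(t) = log(1+t) - ((2t+t²)/2)·(log(N(t)) + 1) for t ≥ 0. Then there exists a constant c₀ > 0 such that H(t) ≤ -c₀·t³/(1+t) for all t ≥ 0. -/
/-- Sharp logarithm upper bound: log(1+u) ≤ u - u²/(2(1+u)) for u ≥ 0. -/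
lemma log_sharp (u : ℝ) (hu : 0 ≤ u) :
    Real.log (1 + u) ≤ u - u ^ 2 / (2 * (1 + u)) := by
  have h1u : (0 : ℝ) < 1 + u := by linarith
  set s : ℝ := u * (2 + u) / (2 * (1 + u)) with hs_def
  have hs : 0 ≤ s := by positivity
  have hexp : 1 + s + s ^ 2 / 2 ≤ Real.exp s := Real.quadratic_le_exp_of_nonneg hs
  have hkey : 1 + u ≤ Real.exp s := by
    refine le_trans ?_ hexp
    have h : u ≤ s + s ^ 2 / 2 := by
      have e : s + s ^ 2 / 2 - u = u ^ 4 / (8 * (1 + u) ^ 2) := by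
        rw [hs_def]; field_simp; ring
      nlinarith [pow_nonneg hu 4, sq_nonneg (1 + u), div_nonneg (pow_nonneg hu 4) (by positivity : (0:ℝ) ≤ 8 * (1 + u) ^ 2), e]
    linarith
  have hlog : Real.log (1 + u) ≤ s := by
    rw [Real.log_le_iff_le_exp h1u]; exact hkey
  have : s = u - u ^ 2 / (2 * (1 + u)) := by
    field_simp [hs_def]
    have h2 : s * (2 * (1 + u)) = u * (2 + u) := by
      rw [hs_def]; exact div_mul_cancel₀ _ (by positivity)
    linear_combination h2
  linarith [this ▸ hlog]

/-- with N(t) = 1 - t/(1+t)² and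
H(t) = log(1+t) - ((2t+t²)/2)·(log N(t) + 1), there is c₀ > 0 with
H(t) ≤ -c₀ t³/(1+t) for all t ≥ 0. -/
theorem stmt_4 :
    ∃ c₀ > (0 : ℝ), ∀ t : ℝ, 0 ≤ t →
      Real.log (1 + t) - ((2 * t + t ^ 2) / 2) * (Real.log (1 - t / (1 + t) ^ 2) + 1)
        ≤ -c₀ * t ^ 3 / (1 + t) := by
  refine ⟨1/2, by norm_num, fun t ht => ?_⟩
  have hx : (0 : ℝ) < 1 + t := by linarith
  have hs : (0 : ℝ) < 1 + t + t ^ 2 := by positivity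
  -- rewrite N(t) = (1+t+t²)/(1+t)²
  have hN : 1 - t / (1 + t) ^ 2 = (1 + t + t ^ 2) / (1 + t) ^ 2 := by
    field_simp; ring
  -- log N = - log(1 + t/(1+t+t²))
  have hu : (1 : ℝ) + t / (1 + t + t ^ 2) = (1 + t) ^ 2 / (1 + t + t ^ 2) := by
    field_simp; ring
  have hlogN : Real.log (1 - t / (1 + t) ^ 2)
      = - Real.log (1 + t / (1 + t + t ^ 2)) := by
    rw [hN, hu, Real.log_div (by positivity) (by positivity),
      Real.log_div (by positivity) (by positivity)]
    ring
  -- sharp bounds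
  have h1 : Real.log (1 + t) ≤ t - t ^ 2 / (2 * (1 + t)) := log_sharp t ht
  have h2 : Real.log (1 + t / (1 + t + t ^ 2))
      ≤ t / (1 + t + t ^ 2) - (t / (1 + t + t ^ 2)) ^ 2
          / (2 * (1 + t / (1 + t + t ^ 2))) :=
    log_sharp _ (by positivity)
  -- simplify the bound on log(1+u)
  have h2' : Real.log (1 + t / (1 + t + t ^ 2))
      ≤ t / (1 + t + t ^ 2) - t ^ 2 / (2 * (1 + t) ^ 2 * (1 + t + t ^ 2)) := by
    refine h2.trans (le_of_eq ?_)
    rw [hu]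
    field_simp
  have hA : 0 ≤ (2 * t + t ^ 2) / 2 := by positivity
  rw [hlogN]
  have hmain : Real.log (1 + t)
      - ((2 * t + t ^ 2) / 2) * (-Real.log (1 + t / (1 + t + t ^ 2)) + 1)
      = Real.log (1 + t)
        + ((2 * t + t ^ 2) / 2) * Real.log (1 + t / (1 + t + t ^ 2))
        - (2 * t + t ^ 2) / 2 := by ring
  rw [hmain]
  have hchain : Real.log (1 + t)
        + ((2 * t + t ^ 2) / 2) * Real.log (1 + t / (1 + t + t ^ 2))
        - (2 * t + t ^ 2) / 2
      ≤ (t - t ^ 2 / (2 * (1 + t)))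
        + ((2 * t + t ^ 2) / 2)
          * (t / (1 + t + t ^ 2) - t ^ 2 / (2 * (1 + t) ^ 2 * (1 + t + t ^ 2)))
        - (2 * t + t ^ 2) / 2 := by
    have := mul_le_mul_of_nonneg_left h2' hA
    linarith
  refine hchain.trans ?_
  -- final rational inequality
  rw [← sub_nonpos]
  have e : t - t ^ 2 / (2 * (1 + t)) +
        (2 * t + t ^ 2) / 2 * (t / (1 + t + t ^ 2) - t ^ 2 / (2 * (1 + t) ^ 2 * (1 + t + t ^ 2))) -
      (2 * t + t ^ 2) / 2 - -(1 / 2) * t ^ 3 / (1 + t)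
      = -((t ^ 4 + 2 * t ^ 5) / (4 * (1 + t) ^ 2 * (1 + t + t ^ 2))) := by
    field_simp
    ring
  rw [e, neg_nonpos]
  positivity
end

section
/- Let μ be a finite Borel measure on ℝ with density at most 1 and connected support. Then for every c > 0, ∫ log(1 + c/|x|) dμ(x) ≤ (c + μ(ℝ))·log 4. -/
open MeasureTheory Set

lemma stmt7_scalar (M c : ℝ) (hM : 0 < M) (hc : 0 < c) :
    M * Real.log (1 + c / (M/4)) + 3 * (M/4) ≤ (c + M) * Real.log 4 := by
  have hL1 : (0.6931471803 : ℝ) < Real.log 2 := Real.log_two_gt_d9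
  have hL2 : Real.log 2 < 0.6931471808 := Real.log_two_lt_d9
  set L := Real.log 2 with hLdef
  have hLpos : 0 < L := by linarith
  have hlog4 : Real.log 4 = 2 * L := by
    rw [show (4:ℝ) = 2 ^ 2 by norm_num, Real.log_pow]; push_cast; ring
  have hcr : c / (M/4) = 4 * c / M := by field_simp
  set s : ℝ := 4 * c / M with hs
  have hspos : 0 < s := by positivity
  have hMs : M * s = 4 * c := by rw [hs]; field_simp
  have h1 : Real.log (1 + s) ≤ (1 + s) * (L/2) - 1 - Real.log (L/2) := by
    have hpos : (0:ℝ) < 1 + s := by linarith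
    have h := Real.log_le_sub_one_of_pos (show (0:ℝ) < (1 + s) * (L/2) by positivity)
    rw [Real.log_mul (ne_of_gt hpos) (by positivity)] at h
    linarith
  have h2 : Real.log (L/2) = Real.log L - L := by
    rw [Real.log_div (ne_of_gt hLpos) two_ne_zero]
  have h3 : 1 - L⁻¹ ≤ Real.log L := by
    have h := Real.log_le_sub_one_of_pos (show (0:ℝ) < 1/L by positivity)
    rw [one_div, Real.log_inv] at h
    linarith
  have hinv : L⁻¹ < 1.45 := by
    rw [inv_lt_comm₀ hLpos (by norm_num)]; linarith
  rw [hcr, hlog4]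
  have hmul := mul_le_mul_of_nonneg_left h1 hM.le
  rw [h2] at hmul
  -- M * log(1+s) ≤ M*(L/2) + (M*s)*(L/2) - M - M*(log L - L)
  have hlogL : -Real.log L ≤ 0.45 := by linarith
  nlinarith [hmul, hMs, mul_le_mul_of_nonneg_left hlogL hM.le]

lemma stmt7_vol (r : ℝ) (hr : 0 < r) :
    Integrable (fun x : ℝ => 3 * max 0 ((r / |x|) ^ ((1:ℝ)/3) - 1)) volume ∧
    ∫ x : ℝ, 3 * max 0 ((r / |x|) ^ ((1:ℝ)/3) - 1) = 3 * r := by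
  set p : ℝ := (1:ℝ)/3 with hp
  set f₀ : ℝ → ℝ := fun t => 3 * max 0 ((r / t) ^ p - 1) with hf₀
  set H : ℝ → ℝ := fun x => f₀ |x| with hH
  set g₀ : ℝ → ℝ := fun t => 3 * (r ^ p * t ^ (-p) - 1) with hg₀
  -- f₀ vanishes for t ≥ r (t > 0) and t ≤ 0
  have hf₀zero : ∀ t : ℝ, r ≤ t → f₀ t = 0 := by
    intro t ht
    have htpos : 0 < t := lt_of_lt_of_le hr ht
    have h1 : (r / t) ^ p ≤ 1 :=
      Real.rpow_le_one (by positivity) ((div_le_one htpos).2 ht) (by norm_num)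
    simp only [hf₀]
    rw [max_eq_left (by linarith), mul_zero]
  -- f₀ = g₀ on Ioc 0 r
  have hEq : EqOn f₀ g₀ (Ioc 0 r) := by
    intro t ht
    have ht0 : (0:ℝ) < t := ht.1
    have h1 : (1:ℝ) ≤ r / t := (one_le_div ht0).2 ht.2
    have h2 : (1:ℝ) ≤ (r / t) ^ p := Real.one_le_rpow h1 (by norm_num)
    have h3 : (r / t) ^ p = r ^ p * t ^ (-p) := by
      rw [div_eq_mul_inv, Real.mul_rpow hr.le (by positivity),
        Real.inv_rpow ht0.le, ← Real.rpow_neg ht0.le]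
    simp only [hf₀, hg₀]
    rw [max_eq_right (by linarith), h3]
  -- interval integrability of g₀
  have hgii : IntervalIntegrable g₀ volume 0 r := by
    apply IntervalIntegrable.const_mul
    exact ((intervalIntegral.intervalIntegrable_rpow' (by norm_num : (-1:ℝ) < -p)).const_mul
      (r ^ p)).sub intervalIntegrable_const
  have hgIoo : IntegrableOn g₀ (Ioo 0 r) := by
    rwa [intervalIntegrable_iff_integrableOn_Ioo_of_le hr.le] at hgii
  -- value of interval integral
  have hgval : ∫ t in (0:ℝ)..r, g₀ t = 3/2 * r := by
    simp only [hg₀]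
    rw [intervalIntegral.integral_const_mul,
      intervalIntegral.integral_sub
        ((intervalIntegral.intervalIntegrable_rpow' (by norm_num : (-1:ℝ) < -p)).const_mul (r ^ p))
        intervalIntegrable_const,
      intervalIntegral.integral_const_mul, integral_rpow (Or.inl (by norm_num : (-1:ℝ) < -p)),
      intervalIntegral.integral_const]
    have h0 : (0:ℝ) ^ (-p + 1) = 0 := by
      rw [Real.zero_rpow]; norm_num [hp]
    rw [h0]
    have hrr : r ^ p * r ^ (-p + 1) = r := by
      rw [← Real.rpow_add hr]; norm_num [hp]
    have hkey : r ^ p * ((r ^ (-p + 1) - 0) / (-p + 1)) = 3/2 * r := by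
      rw [sub_zero, ← mul_div_assoc, hrr]; norm_num [hp]; ring
    rw [hkey, smul_eq_mul, sub_zero, mul_one]
    ring
  -- measurability of H
  have hHmeas : Measurable H := by
    simp only [hH, hf₀]
    fun_prop
  -- integrability on the positive side
  have hHpos : IntegrableOn H (Ioo 0 r) := by
    refine hgIoo.congr_fun (fun x hx => ?_) measurableSet_Ioo
    have : f₀ x = g₀ x := hEq (Ioo_subset_Ioc_self hx)
    simp only [hH, abs_of_pos hx.1, this]
  -- integrability on the negative side
  have hHneg : IntegrableOn H (Ioc (-r) 0) := by
    have m : MeasurableEmbedding (Neg.neg : ℝ → ℝ) :=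
      (Homeomorph.neg ℝ).measurableEmbedding
    rw [show (volume : Measure ℝ) = Measure.map Neg.neg volume from
      (Measure.map_neg_eq_self (volume : Measure ℝ)).symm,
      MeasurableEmbedding.integrableOn_map_iff m]
    have hcomp : (H ∘ (Neg.neg : ℝ → ℝ)) = H := by
      funext x; simp only [Function.comp_apply, hH, abs_neg]
    rw [hcomp]
    have hpre : (Neg.neg : ℝ → ℝ) ⁻¹' (Ioc (-r) 0) = Ico 0 r := by
      ext x
      simp only [mem_preimage, mem_Ioc, mem_Ico]
      constructor <;> intro h <;> constructor <;> linarith [h.1, h.2]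
    rw [hpre]
    exact (integrableOn_Ico_iff_integrableOn_Ioo).2 hHpos
  -- global integrability
  have hHind : H = Set.indicator (Ioo (-r) r) H := by
    funext x
    by_cases hx : x ∈ Ioo (-r) r
    · rw [Set.indicator_of_mem hx]
    · rw [Set.indicator_of_notMem hx]
      have : r ≤ |x| := by
        simp only [mem_Ioo, not_and_or, not_lt] at hx
        rcases hx with h | h
        · rw [abs_of_nonpos (by linarith)]; linarith
        · rw [abs_of_nonneg (by linarith)]; exact h
      exact hf₀zero _ this
  have hHint : Integrable H volume := by
    rw [hHind, integrable_indicator_iff measurableSet_Ioo]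
    have : Ioc (-r) 0 ∪ Ioo 0 r = Ioo (-r) r :=
      Ioc_union_Ioo_eq_Ioo (by linarith) hr
    rw [← this]
    exact hHneg.union hHpos
  refine ⟨hHint, ?_⟩
  -- compute the integral
  have hcomp : ∫ x : ℝ, H x = 2 * ∫ t in Ioi (0:ℝ), f₀ t := integral_comp_abs (f := f₀)
  have h1 : ∫ t in Ioi (0:ℝ), f₀ t = ∫ t in Ioi (0:ℝ), Set.indicator (Ioc 0 r) f₀ t := by
    refine setIntegral_congr_fun measurableSet_Ioi (fun t ht => ?_)
    by_cases htr : t ≤ r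
    · exact (Set.indicator_of_mem (s := Ioc (0:ℝ) r) (a := t) ⟨ht, htr⟩ f₀).symm
    · exact (hf₀zero _ (by linarith)).trans
        (Set.indicator_of_notMem (s := Ioc (0:ℝ) r) (a := t) (by simp [mem_Ioc, htr]) f₀).symm
  have h2 : ∫ t in Ioi (0:ℝ), Set.indicator (Ioc 0 r) f₀ t = ∫ t in Ioc (0:ℝ) r, f₀ t := by
    rw [setIntegral_indicator measurableSet_Ioc,
      Set.inter_eq_self_of_subset_right Ioc_subset_Ioi_self]
  have h3 : ∫ t in Ioc (0:ℝ) r, f₀ t = ∫ t in Ioc (0:ℝ) r, g₀ t :=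
    setIntegral_congr_fun measurableSet_Ioc hEq
  have h4 : ∫ t in Ioc (0:ℝ) r, g₀ t = ∫ t in (0:ℝ)..r, g₀ t :=
    (intervalIntegral.integral_of_le hr.le).symm
  calc ∫ x : ℝ, H x = 2 * ∫ t in Ioi (0:ℝ), f₀ t := hcomp
    _ = 2 * (3/2 * r) := by rw [h1, h2, h3, h4, hgval]
    _ = 3 * r := by ring

/-- if μ is a finite measure on ℝ with density at most 1 (i.e. μ ≤ Lebesgue)
and connected support, then for every c > 0, ∫ log(1 + c/|x|) dμ(x) ≤ (c + μ(ℝ))·log 4. -/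
theorem stmt_7 (μ : Measure ℝ) [IsFiniteMeasure μ] (hμ : μ ≤ volume)
    (S : Set ℝ) (hS : IsConnected S) (hsupp : μ Sᶜ = 0)
    (c : ℝ) (hc : 0 < c) :
    ∫ x, Real.log (1 + c / |x|) ∂μ ≤ (c + (μ Set.univ).toReal) * Real.log 4 := by
  have hlog4 : (0:ℝ) ≤ Real.log 4 := Real.log_nonneg (by norm_num)
  by_cases hM0 : μ Set.univ = 0
  · have hzero : μ = 0 := Measure.measure_univ_eq_zero.mp hM0
    rw [hzero, integral_zero_measure]
    have h00 : ((0 : Measure ℝ) Set.univ).toReal = 0 := by simp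
    rw [h00, add_zero]
    positivity
  set M : ℝ := (μ Set.univ).toReal with hMdef
  have hM : 0 < M := ENNReal.toReal_pos hM0 (measure_ne_top μ _)
  set r : ℝ := M / 4 with hrdef
  have hr : 0 < r := by positivity
  obtain ⟨hHint, hHval⟩ := stmt7_vol r hr
  set H : ℝ → ℝ := fun x : ℝ => 3 * max 0 ((r / |x|) ^ ((1:ℝ)/3) - 1) with hH
  have hHnn : ∀ x, 0 ≤ H x := fun x => by positivity
  have hlogc : (0:ℝ) ≤ Real.log (1 + c / r) :=
    Real.log_nonneg (by nlinarith [div_nonneg hc.le hr.le])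
  -- pointwise bound
  have hpt : ∀ x : ℝ, Real.log (1 + c / |x|) ≤ Real.log (1 + c / r) + H x := by
    intro x
    rcases eq_or_lt_of_le (abs_nonneg x) with h0 | hx
    · rw [← h0, div_zero, add_zero, Real.log_one]
      exact add_nonneg hlogc (hHnn x)
    rcases le_or_gt r |x| with hge | hlt
    · have h1 : Real.log (1 + c / |x|) ≤ Real.log (1 + c / r) := by
        apply Real.log_le_log (by positivity)
        have : c / |x| ≤ c / r := div_le_div_of_nonneg_left hc.le hr hge
        linarith
      linarith [hHnn x]
    · have h1 : Real.log (1 + c / |x|) ≤ Real.log ((1 + c / r) * (r / |x|)) := by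
        apply Real.log_le_log (by positivity)
        have he1 : 1 + c / |x| = (|x| + c) / |x| := by field_simp
        have he2 : (1 + c / r) * (r / |x|) = (r + c) / |x| := by
          field_simp
        rw [he1, he2]
        gcongr
      have h2 : Real.log ((1 + c / r) * (r / |x|)) =
          Real.log (1 + c / r) + Real.log (r / |x|) :=
        Real.log_mul (by positivity) (by positivity)
      have h3 : Real.log (r / |x|) ≤ 3 * ((r / |x|) ^ ((1:ℝ)/3) - 1) := by
        have ht : 0 < r / |x| := by positivity
        have h := Real.log_le_sub_one_of_pos (Real.rpow_pos_of_pos ht ((1:ℝ)/3))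
        rw [Real.log_rpow ht] at h
        linarith
      have h4 : 3 * ((r / |x|) ^ ((1:ℝ)/3) - 1) ≤ H x := by
        have := le_max_right (0:ℝ) ((r / |x|) ^ ((1:ℝ)/3) - 1)
        simp only [hH]
        linarith
      linarith
  -- integrability over μ
  have hHμ : Integrable H μ := hHint.mono_measure hμ
  have hGμ : Integrable (fun x => Real.log (1 + c / r) + H x) μ :=
    (integrable_const _).add hHμ
  -- main chain
  have step1 : ∫ x, Real.log (1 + c / |x|) ∂μ ≤ ∫ x, (Real.log (1 + c / r) + H x) ∂μ := by
    refine integral_mono_of_nonneg (ae_of_all _ fun x => ?_) hGμ (ae_of_all _ hpt)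
    exact Real.log_nonneg (le_add_of_nonneg_right (by positivity))
  have step2 : ∫ x, (Real.log (1 + c / r) + H x) ∂μ
      = M * Real.log (1 + c / r) + ∫ x, H x ∂μ := by
    rw [integral_add (integrable_const _) hHμ, integral_const, smul_eq_mul]; rfl
  have step3 : ∫ x, H x ∂μ ≤ ∫ x, H x ∂(volume : Measure ℝ) :=
    integral_mono_measure hμ (ae_of_all _ hHnn) hHint
  have step4 : (∫ x, H x ∂(volume : Measure ℝ)) = 3 * r := hHval
  have step5 := stmt7_scalar M c hM hc
  calc ∫ x, Real.log (1 + c / |x|) ∂μ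
      ≤ M * Real.log (1 + c / r) + ∫ x, H x ∂μ := by rw [← step2]; exact step1
    _ ≤ M * Real.log (1 + c / r) + 3 * r := by rw [← step4]; linarith [step3]
    _ ≤ (c + M) * Real.log 4 := by rw [hrdef]; exact step5
end

section
/- Let α > 3, β ∈ (0,1), and a ∈ ℝ with a = α/12 - β/2. Then ∑_{ℓ=k+1}^{N} ℓ^{a}·k^{a}/(ℓ^{α/2} - k^{α/2}) = O(k^{1 - α/3 - β}·log k) uniformly in 1 ≤ k < N, i.e., there is a constant C (depending only on α, β) with ∑_{ℓ=k+1}^{N} ℓ^{a}k^{a}/(ℓ^{α/2} - k^{α/2}) ≤ C·k^{1-α/3-β}·log k for all k ≥ 2 and N > k. -/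
set_option maxHeartbeats 1000000


open Finset

lemma telesc (f : ℕ → ℝ) : ∀ {m N : ℕ}, m ≤ N →
    ∑ ℓ ∈ Finset.Ioc m N, (f (ℓ - 1) - f ℓ) = f m - f N := by
  intro m N h
  induction N, h using Nat.le_induction with
  | base => simp
  | succ N hN ih =>
    rw [Finset.sum_Ioc_succ_top hN, ih]
    simp only [Nat.add_sub_cancel]
    ring

lemma rpow_diff_lower {x y r : ℝ} (hx : 0 < x) (hxy : x ≤ y) (hr : 0 ≤ r) :
    y ^ (-r) + r * y ^ (-r - 1) * (y - x) ≤ x ^ (-r) := by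
  have hy : 0 < y := hx.trans_le hxy
  have h1 : Real.log (x / y) ≤ x / y - 1 := Real.log_le_sub_one_of_pos (by positivity)
  have h2 : 1 - x / y ≤ Real.log (y / x) := by
    rw [Real.log_div hy.ne' hx.ne']
    rw [Real.log_div hx.ne' hy.ne'] at h1
    linarith
  have h3 : 1 + r * (1 - x / y) ≤ (y / x) ^ r := by
    calc 1 + r * (1 - x / y) ≤ 1 + r * Real.log (y / x) := by nlinarith
    _ ≤ Real.exp (r * Real.log (y / x)) := by
        linarith [Real.add_one_le_exp (r * Real.log (y / x))]
    _ = (y / x) ^ r := by rw [Real.rpow_def_of_pos (by positivity), mul_comm]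
  have hxr : (0:ℝ) < x ^ r := Real.rpow_pos_of_pos hx _
  have hyr : (0:ℝ) < y ^ r := Real.rpow_pos_of_pos hy _
  have key : y ^ (-r) * ((y / x) ^ r) = x ^ (-r) := by
    rw [Real.div_rpow hy.le hx.le, Real.rpow_neg hy.le, Real.rpow_neg hx.le]
    field_simp
  have hsub : y ^ (-r - 1) = y ^ (-r) / y := by
    rw [Real.rpow_sub hy, Real.rpow_one]
  rw [hsub, ← key]
  have heq : y ^ (-r) + r * (y ^ (-r) / y) * (y - x)
      = y ^ (-r) * (1 + r * (1 - x / y)) := by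
    rw [Real.rpow_neg hy.le]
    field_simp
  rw [heq]
  have hyr' : (0:ℝ) < y ^ (-r) := Real.rpow_pos_of_pos hy _
  exact mul_le_mul_of_nonneg_left h3 hyr'.le

lemma tail_sum {m N : ℕ} (hm : 1 ≤ m) (h : m ≤ N) {r : ℝ} (hr : 0 < r) :
    ∑ ℓ ∈ Finset.Ioc m N, (ℓ:ℝ) ^ (-r - 1) ≤ (m:ℝ) ^ (-r) / r := by
  have key : ∑ ℓ ∈ Finset.Ioc m N, (ℓ:ℝ) ^ (-r - 1)
      ≤ ∑ ℓ ∈ Finset.Ioc m N,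
        (((ℓ - 1 : ℕ):ℝ) ^ (-r) - ((ℓ:ℕ):ℝ) ^ (-r)) / r := by
    apply Finset.sum_le_sum
    intro ℓ hℓ
    obtain ⟨h1, h2⟩ := Finset.mem_Ioc.mp hℓ
    have hℓ1 : 1 ≤ ℓ := le_trans hm h1.le
    have hcast : ((ℓ - 1 : ℕ):ℝ) = (ℓ:ℝ) - 1 := by
      push_cast [Nat.cast_sub hℓ1]; ring
    have hx : (0:ℝ) < (ℓ:ℝ) - 1 := by
      have h2' : (2:ℕ) ≤ ℓ := by omega
      have : (2:ℝ) ≤ (ℓ:ℝ) := by exact_mod_cast h2'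
      linarith
    have := rpow_diff_lower (x := (ℓ:ℝ) - 1) (y := (ℓ:ℝ)) hx (by linarith) hr.le
    rw [hcast]
    rw [le_div_iff₀ hr]
    nlinarith [this]
  rw [← Finset.sum_div] at key
  rw [telesc (fun n => ((n:ℕ):ℝ) ^ (-r)) h] at key
  have hN : (0:ℝ) ≤ (N:ℝ) ^ (-r) := Real.rpow_nonneg (Nat.cast_nonneg N) _
  calc ∑ ℓ ∈ Finset.Ioc m N, (ℓ:ℝ) ^ (-r - 1)
      ≤ ((m:ℝ) ^ (-r) - (N:ℝ) ^ (-r)) / r := key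
    _ ≤ (m:ℝ) ^ (-r) / r := by
        gcongr
        linarith

lemma harm_le {k M : ℕ} (hk : 2 ≤ k) (hM : M ≤ 2 * k) :
    ∑ ℓ ∈ Finset.Ioc k M, (1 : ℝ) / ((ℓ:ℝ) - (k:ℝ)) ≤ 1 + Real.log k := by
  have hk1 : (1:ℝ) ≤ (k:ℝ) := by exact_mod_cast Nat.one_le_of_lt hk
  have hlogk : 0 ≤ Real.log k := Real.log_nonneg hk1
  rcases le_or_gt M k with h | h
  · rw [Finset.Ioc_eq_empty (by omega)]
    simp
    linarith
  · have hk1M : k + 1 ≤ M := h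
    rw [← Finset.sum_Ioc_consecutive (fun ℓ => (1:ℝ)/((ℓ:ℝ)-(k:ℝ))) (Nat.le_succ k) hk1M]
    have hfirst : ∑ ℓ ∈ Finset.Ioc k (k+1), (1:ℝ)/((ℓ:ℝ)-(k:ℝ)) = 1 := by
      rw [Nat.Ioc_succ_singleton, Finset.sum_singleton]
      push_cast
      norm_num
    rw [hfirst]
    have hsecond : ∑ ℓ ∈ Finset.Ioc (k+1) M, (1:ℝ)/((ℓ:ℝ)-(k:ℝ)) ≤ Real.log k := by
      have key : ∑ ℓ ∈ Finset.Ioc (k+1) M, (1:ℝ)/((ℓ:ℝ)-(k:ℝ))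
          ≤ ∑ ℓ ∈ Finset.Ioc (k+1) M,
            ((fun n : ℕ => -Real.log ((n:ℝ)-(k:ℝ))) (ℓ-1)
              - (fun n : ℕ => -Real.log ((n:ℝ)-(k:ℝ))) ℓ) := by
        apply Finset.sum_le_sum
        intro ℓ hℓ
        obtain ⟨h1, h2⟩ := Finset.mem_Ioc.mp hℓ
        have hcast : ((ℓ - 1 : ℕ):ℝ) = (ℓ:ℝ) - 1 := by
          have : 1 ≤ ℓ := by omega
          push_cast [Nat.cast_sub this]; ring
        simp only [hcast]
        set u : ℝ := (ℓ:ℝ) - (k:ℝ) with hu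
        have hu2 : (2:ℝ) ≤ u := by
          have : (k:ℝ) + 2 ≤ (ℓ:ℝ) := by exact_mod_cast Nat.succ_le_of_lt h1
          simp [hu]; linarith
        have hlog : Real.log ((u-1)/u) ≤ (u-1)/u - 1 :=
          Real.log_le_sub_one_of_pos (div_pos (by linarith) (by linarith))
        rw [Real.log_div (by linarith) (by linarith)] at hlog
        have hdiv : (u-1)/u - 1 = -(1/u) := by field_simp; ring
        have hgoal : (1:ℝ)/u ≤ Real.log u - Real.log (u-1) := by
          rw [hdiv] at hlog; linarith
        have : ((ℓ:ℝ) - 1 - (k:ℝ)) = u - 1 := by rw [hu]; ring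
        rw [this]
        linarith
      rw [telesc (fun n : ℕ => -Real.log ((n:ℝ)-(k:ℝ))) hk1M] at key
      have h1 : ((k+1 : ℕ):ℝ) - (k:ℝ) = 1 := by push_cast; ring
      rw [h1, Real.log_one] at key
      have hMk : Real.log ((M:ℝ) - (k:ℝ)) ≤ Real.log k := by
        apply Real.log_le_log
        · have : (k:ℝ) + 1 ≤ (M:ℝ) := by exact_mod_cast hk1M
          linarith
        · have : (M:ℝ) ≤ 2 * (k:ℝ) := by exact_mod_cast hM
          linarith
      calc ∑ ℓ ∈ Finset.Ioc (k+1) M, (1:ℝ)/((ℓ:ℝ)-(k:ℝ))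
          ≤ -0 - -Real.log ((M:ℝ) - (k:ℝ)) := key
        _ = Real.log ((M:ℝ) - (k:ℝ)) := by ring
        _ ≤ Real.log k := hMk
    linarith



open Finset

/-- for α > 3, β ∈ (0,1), a = α/12 - β/2, there is C > 0 with
∑_{ℓ=k+1}^{N} ℓ^a k^a/(ℓ^{α/2} - k^{α/2}) ≤ C·k^{1-α/3-β}·log k for all k ≥ 2, N > k. -/
theorem stmt_11 (α β : ℝ) (hα : 3 < α) (hβ0 : 0 < β) (hβ1 : β < 1) :
    ∃ C > (0 : ℝ), ∀ k N : ℕ, 2 ≤ k → k < N →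
      ∑ ℓ ∈ Finset.Ioc k N,
          ((ℓ : ℝ) ^ (α / 12 - β / 2) * (k : ℝ) ^ (α / 12 - β / 2))
            / ((ℓ : ℝ) ^ (α / 2) - (k : ℝ) ^ (α / 2))
        ≤ C * (k : ℝ) ^ (1 - α / 3 - β) * Real.log k := by
  set a : ℝ := α / 12 - β / 2 with ha
  set q : ℝ := α / 2 with hq
  set e : ℝ := 1 - α / 3 - β with he
  have hq1 : 1 < q := by rw [hq]; linarith
  have hqpos : 0 < q := by linarith
  set r : ℝ := q - a - 1 with hrdef
  have hr : 0 < r := by rw [hrdef, hq, ha]; linarith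
  set A : ℝ := (2:ℝ) ^ |a| with hAdef
  have hA : (0:ℝ) < A := Real.rpow_pos_of_pos two_pos _
  have hBpos : (0:ℝ) < 1 - (2:ℝ)^(-q) := by
    have : (2:ℝ)^(-q) < 1 := Real.rpow_lt_one_of_one_lt_of_neg one_lt_two (by linarith)
    linarith
  have hlog2 : 0 < Real.log 2 := Real.log_pos one_lt_two
  refine ⟨A * (1 + (Real.log 2)⁻¹) + (1 - (2:ℝ)^(-q))⁻¹ / r * (Real.log 2)⁻¹, ?_, ?_⟩
  · have h1 : 0 < A * (1 + (Real.log 2)⁻¹) := by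
      apply mul_pos hA
      have : 0 < (Real.log 2)⁻¹ := inv_pos.mpr hlog2
      linarith
    have h2 : 0 < (1 - (2:ℝ)^(-q))⁻¹ / r * (Real.log 2)⁻¹ :=
      mul_pos (div_pos (inv_pos.mpr hBpos) hr) (inv_pos.mpr hlog2)
    linarith
  · intro k N hk hkN
    have hK2 : (2:ℝ) ≤ (k:ℝ) := by exact_mod_cast hk
    have hK0 : (0:ℝ) < (k:ℝ) := by linarith
    have hlogk : Real.log 2 ≤ Real.log k := Real.log_le_log two_pos hK2
    have hKe : (0:ℝ) < (k:ℝ) ^ e := Real.rpow_pos_of_pos hK0 _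
    set M := min N (2 * k) with hM
    have hkM : k ≤ M := le_min (by omega) (by omega)
    have hMN : M ≤ N := min_le_left _ _
    have hM2k : M ≤ 2 * k := min_le_right _ _
    rw [← Finset.sum_Ioc_consecutive _ hkM hMN]
    have part1 : ∑ ℓ ∈ Finset.Ioc k M, ((ℓ:ℝ)^a * (k:ℝ)^a)/((ℓ:ℝ)^q - (k:ℝ)^q)
        ≤ A * (k:ℝ)^e * (1 + Real.log k) := by
      have step : ∀ ℓ ∈ Finset.Ioc k M, ((ℓ:ℝ)^a * (k:ℝ)^a)/((ℓ:ℝ)^q - (k:ℝ)^q)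
          ≤ A * (k:ℝ)^e * (1/((ℓ:ℝ) - (k:ℝ))) := by
        intro ℓ hℓ
        obtain ⟨h1, h2⟩ := Finset.mem_Ioc.mp hℓ
        have hL : (k:ℝ) + 1 ≤ (ℓ:ℝ) := by exact_mod_cast h1
        have hL0 : (0:ℝ) < (ℓ:ℝ) := by linarith
        have hL2k : (ℓ:ℝ) ≤ 2 * (k:ℝ) := by exact_mod_cast le_trans h2 hM2k
        have e1 : (ℓ:ℝ)^q = (ℓ:ℝ)^(q-1) * (ℓ:ℝ) := by
          rw [← Real.rpow_add_one hL0.ne' (q-1)]; ring_nf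
        have e2 : (k:ℝ)^q = (k:ℝ)^(q-1) * (k:ℝ) := by
          rw [← Real.rpow_add_one hK0.ne' (q-1)]; ring_nf
        have e3 : (k:ℝ)^(q-1) ≤ (ℓ:ℝ)^(q-1) :=
          Real.rpow_le_rpow hK0.le (by linarith) (by linarith)
        have hkq1 : (0:ℝ) < (k:ℝ)^(q-1) := Real.rpow_pos_of_pos hK0 _
        have hden : (k:ℝ)^(q-1) * ((ℓ:ℝ) - (k:ℝ)) ≤ (ℓ:ℝ)^q - (k:ℝ)^q := by
          nlinarith
        have hdenpos : (0:ℝ) < (k:ℝ)^(q-1) * ((ℓ:ℝ) - (k:ℝ)) := by nlinarith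
        have hKa : (0:ℝ) < (k:ℝ)^a := Real.rpow_pos_of_pos hK0 _
        have hnum : (ℓ:ℝ)^a ≤ A * (k:ℝ)^a := by
          rcases le_or_gt 0 a with hha | hha
          · have hr1 : (ℓ:ℝ)^a ≤ (2*(k:ℝ))^a := Real.rpow_le_rpow hL0.le hL2k hha
            rw [Real.mul_rpow two_pos.le hK0.le] at hr1
            have h2a : (2:ℝ)^a ≤ A :=
              Real.rpow_le_rpow_of_exponent_le one_le_two (le_abs_self a)
            nlinarith
          · have hr1 : (ℓ:ℝ)^a ≤ (k:ℝ)^a :=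
              Real.rpow_le_rpow_of_nonpos hK0 (by linarith) hha.le
            have h2a : (1:ℝ) ≤ A := Real.one_le_rpow one_le_two (abs_nonneg a)
            nlinarith
        have hnum' : (ℓ:ℝ)^a * (k:ℝ)^a ≤ A * (k:ℝ)^a * (k:ℝ)^a :=
          mul_le_mul_of_nonneg_right hnum hKa.le
        have hchain : ((ℓ:ℝ)^a * (k:ℝ)^a)/((ℓ:ℝ)^q - (k:ℝ)^q)
            ≤ (A * (k:ℝ)^a * (k:ℝ)^a)/((k:ℝ)^(q-1) * ((ℓ:ℝ) - (k:ℝ))) :=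
          div_le_div₀ (by positivity) hnum' hdenpos hden
        have e4 : (k:ℝ)^a * (k:ℝ)^a = (k:ℝ)^(a+a) := (Real.rpow_add hK0 a a).symm
        have e5 : (k:ℝ)^e = (k:ℝ)^(a+a) / (k:ℝ)^(q-1) := by
          rw [← Real.rpow_sub hK0]
          congr 1
          rw [ha, hq, he]; ring
        have hLK : (ℓ:ℝ) - (k:ℝ) ≠ 0 := by linarith
        have hrw : (A * (k:ℝ)^a * (k:ℝ)^a)/((k:ℝ)^(q-1) * ((ℓ:ℝ) - (k:ℝ)))
            = A * (k:ℝ)^e * (1/((ℓ:ℝ) - (k:ℝ))) := by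
          rw [mul_assoc A, e4, e5]
          field_simp
        rw [hrw] at hchain
        exact hchain
      calc ∑ ℓ ∈ Finset.Ioc k M, ((ℓ:ℝ)^a * (k:ℝ)^a)/((ℓ:ℝ)^q - (k:ℝ)^q)
          ≤ ∑ ℓ ∈ Finset.Ioc k M, A * (k:ℝ)^e * (1/((ℓ:ℝ) - (k:ℝ))) :=
            Finset.sum_le_sum step
        _ = A * (k:ℝ)^e * ∑ ℓ ∈ Finset.Ioc k M, 1/((ℓ:ℝ) - (k:ℝ)) := by
            rw [← Finset.mul_sum]
        _ ≤ A * (k:ℝ)^e * (1 + Real.log k) := by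
            apply mul_le_mul_of_nonneg_left (harm_le hk hM2k) (mul_pos hA hKe).le
    have part2 : ∑ ℓ ∈ Finset.Ioc M N, ((ℓ:ℝ)^a * (k:ℝ)^a)/((ℓ:ℝ)^q - (k:ℝ)^q)
        ≤ (1 - (2:ℝ)^(-q))⁻¹ / r * (k:ℝ)^e := by
      have hrhs : (0:ℝ) ≤ (1 - (2:ℝ)^(-q))⁻¹ / r * (k:ℝ)^e :=
        (mul_pos (div_pos (inv_pos.mpr hBpos) hr) hKe).le
      rcases lt_or_ge N (2*k) with hN2k | hN2k
      · have hMeq : M = N := min_eq_left (by omega)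
        rw [hMeq, Finset.Ioc_self, Finset.sum_empty]
        exact hrhs
      · have hMeq : M = 2*k := min_eq_right hN2k
        rw [hMeq]
        have hKa : (0:ℝ) < (k:ℝ)^a := Real.rpow_pos_of_pos hK0 _
        have step : ∀ ℓ ∈ Finset.Ioc (2*k) N, ((ℓ:ℝ)^a * (k:ℝ)^a)/((ℓ:ℝ)^q - (k:ℝ)^q)
            ≤ (1 - (2:ℝ)^(-q))⁻¹ * (k:ℝ)^a * (ℓ:ℝ)^(-r-1) := by
          intro ℓ hℓ
          obtain ⟨h1, h2⟩ := Finset.mem_Ioc.mp hℓ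
          have hL2k : 2*(k:ℝ) < (ℓ:ℝ) := by
            have : ((2*k : ℕ):ℝ) < (ℓ:ℝ) := by exact_mod_cast h1
            push_cast at this; linarith
          have hL0 : (0:ℝ) < (ℓ:ℝ) := by linarith
          have hLq : (0:ℝ) < (ℓ:ℝ)^q := Real.rpow_pos_of_pos hL0 _
          have h2qpos : (0:ℝ) < (2:ℝ)^q := Real.rpow_pos_of_pos two_pos _
          have hden : (1 - (2:ℝ)^(-q)) * (ℓ:ℝ)^q ≤ (ℓ:ℝ)^q - (k:ℝ)^q := by
            have hKq : (k:ℝ)^q ≤ ((ℓ:ℝ)/2)^q :=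
              Real.rpow_le_rpow hK0.le (by linarith) hqpos.le
            rw [Real.div_rpow hL0.le two_pos.le] at hKq
            have h2q : (2:ℝ)^(-q) = ((2:ℝ)^q)⁻¹ := by
              rw [Real.rpow_neg two_pos.le]
            rw [h2q]
            have hd : (ℓ:ℝ)^q / (2:ℝ)^q = ((2:ℝ)^q)⁻¹ * (ℓ:ℝ)^q := by
              field_simp
            rw [hd] at hKq
            nlinarith
          have hdenpos : 0 < (1 - (2:ℝ)^(-q)) * (ℓ:ℝ)^q := mul_pos hBpos hLq
          have hchain : ((ℓ:ℝ)^a * (k:ℝ)^a)/((ℓ:ℝ)^q - (k:ℝ)^q)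
              ≤ ((ℓ:ℝ)^a * (k:ℝ)^a)/((1 - (2:ℝ)^(-q)) * (ℓ:ℝ)^q) :=
            div_le_div₀ (by positivity) le_rfl hdenpos hden
          have e6 : (ℓ:ℝ)^(-r-1) = (ℓ:ℝ)^a / (ℓ:ℝ)^q := by
            rw [← Real.rpow_sub hL0]
            congr 1
            rw [hrdef, ha, hq]; ring
          have hrw : ((ℓ:ℝ)^a * (k:ℝ)^a)/((1 - (2:ℝ)^(-q)) * (ℓ:ℝ)^q)
              = (1 - (2:ℝ)^(-q))⁻¹ * (k:ℝ)^a * (ℓ:ℝ)^(-r-1) := by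
            rw [e6]
            field_simp
          rw [hrw] at hchain
          exact hchain
        have htail : ∑ ℓ ∈ Finset.Ioc (2*k) N, (ℓ:ℝ)^(-r-1)
            ≤ ((2*k : ℕ):ℝ)^(-r) / r := tail_sum (by omega) hN2k hr
        have htail2 : ((2*k : ℕ):ℝ)^(-r) ≤ (k:ℝ)^(-r) := by
          have hc : ((2*k : ℕ):ℝ) = 2*(k:ℝ) := by push_cast; ring
          rw [hc]
          exact Real.rpow_le_rpow_of_nonpos hK0 (by linarith) (by linarith)
        have e7 : (k:ℝ)^a * (k:ℝ)^(-r) = (k:ℝ)^e := by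
          rw [← Real.rpow_add hK0]
          congr 1
          rw [ha, hrdef, hq, he, ha]; ring
        calc ∑ ℓ ∈ Finset.Ioc (2*k) N, ((ℓ:ℝ)^a * (k:ℝ)^a)/((ℓ:ℝ)^q - (k:ℝ)^q)
            ≤ ∑ ℓ ∈ Finset.Ioc (2*k) N, (1 - (2:ℝ)^(-q))⁻¹ * (k:ℝ)^a * (ℓ:ℝ)^(-r-1) :=
              Finset.sum_le_sum step
          _ = (1 - (2:ℝ)^(-q))⁻¹ * (k:ℝ)^a * ∑ ℓ ∈ Finset.Ioc (2*k) N, (ℓ:ℝ)^(-r-1) := by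
              rw [← Finset.mul_sum]
          _ ≤ (1 - (2:ℝ)^(-q))⁻¹ * (k:ℝ)^a * (((2*k : ℕ):ℝ)^(-r) / r) := by
              apply mul_le_mul_of_nonneg_left htail
                (mul_pos (inv_pos.mpr hBpos) hKa).le
          _ ≤ (1 - (2:ℝ)^(-q))⁻¹ * (k:ℝ)^a * ((k:ℝ)^(-r) / r) := by
              apply mul_le_mul_of_nonneg_left _ (mul_pos (inv_pos.mpr hBpos) hKa).le
              exact div_le_div_of_nonneg_right htail2 hr.le
          _ = (1 - (2:ℝ)^(-q))⁻¹ / r * (k:ℝ)^e := by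
              rw [← e7]; field_simp
    have h1b : 1 + Real.log k ≤ (1 + (Real.log 2)⁻¹) * Real.log k := by
      have h1 : (1:ℝ) ≤ Real.log k / Real.log 2 := (one_le_div hlog2).mpr hlogk
      rw [div_eq_inv_mul] at h1
      nlinarith
    have c1 : A * (k:ℝ)^e * (1 + Real.log k)
        ≤ A * (k:ℝ)^e * ((1 + (Real.log 2)⁻¹) * Real.log k) :=
      mul_le_mul_of_nonneg_left h1b (mul_pos hA hKe).le
    have h1c : (1:ℝ) ≤ (Real.log 2)⁻¹ * Real.log k := by
      have h1 : (1:ℝ) ≤ Real.log k / Real.log 2 := (one_le_div hlog2).mpr hlogk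
      rw [div_eq_inv_mul] at h1; exact h1
    have c2 : (1 - (2:ℝ)^(-q))⁻¹ / r * (k:ℝ)^e * 1
        ≤ (1 - (2:ℝ)^(-q))⁻¹ / r * (k:ℝ)^e * ((Real.log 2)⁻¹ * Real.log k) :=
      mul_le_mul_of_nonneg_left h1c (mul_pos (div_pos (inv_pos.mpr hBpos) hr) hKe).le
    have := add_le_add part1 part2
    nlinarith [this, c1, c2]
end
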